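/- arXiv:2312.02584 — 3 statements merged into one kernel-verified Lean document; each statement's English description precedes it below -/
import Mathlib

section
/- Let $(W,S)$ be a Coxeter system, $h$ in the open fundamental chamber, and suppose the standard subgroup $W^{(i)}$ has infinite index in $W$. Then for every $t \leq \langle\omega_i, h\rangle$, the slice $P^{(i)}(t) = \operatorname{conv}(W\cdot h) \cap \{y : \langle\omega_i, y\rangle = t\}$ is nonempty. Equivalently, the set $\{\langle \omega_i, w(h)\rangle : w \in W\}$ is unbounded below. -/
open scoped Pointwise

/-- The Coxeter matrix entry attached to a product `a_ij * a_ji` of entries of a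
generalized Cartan matrix, via the standard table (`0` encodes `∞`). -/
def gcmCoxeterEntry (p : ℤ) : ℕ :=
  if p = 0 then 2 else if p = 1 then 3 else if p = 2 then 4 else if p = 3 then 6 else 0

/-- The Weyl group of a symmetrizable generalized Cartan matrix, together with its action
on the real Cartan subalgebra of a free and cofree Kac–Moody root datum. -/
structure KMWeyl (n : ℕ) (V : Type*) [AddCommGroup V] [Module ℝ V]
    (W : Type*) [Group W] (M : CoxeterMatrix (Fin n)) where
  /-- the generalized Cartan matrix -/
  A : Matrix (Fin n) (Fin n) ℤ
  diag : ∀ i, A i i = 2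
  offDiag : ∀ i j, i ≠ j → A i j ≤ 0
  zeroIff : ∀ i j, (A i j = 0 ↔ A j i = 0)
  symmetrizable : ∃ D B : Matrix (Fin n) (Fin n) ℝ, D.IsDiag ∧ B.IsSymm ∧
    A.map (Int.cast : ℤ → ℝ) = D * B
  coxMat : ∀ i j, i ≠ j → M i j = gcmCoxeterEntry (A i j * A j i)
  /-- the Coxeter system structure on the Weyl group -/
  cs : CoxeterSystem M W
  /-- the linear action of the Weyl group on the Cartan subalgebra -/
  ρ : W →* (V →ₗ[ℝ] V)
  /-- the simple roots -/
  α : Fin n → (V →ₗ[ℝ] ℝ)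
  /-- the simple coroots -/
  cor : Fin n → V
  pairing : ∀ i j, α j (cor i) = (A i j : ℝ)
  refl : ∀ i v, ρ (cs.simple i) v = v - α i v • cor i
  freeRoots : LinearIndependent ℝ α
  cofree : LinearIndependent ℝ cor

namespace KMWeyl

variable {n : ℕ} {V : Type*} [AddCommGroup V] [Module ℝ V]
  {W : Type*} [Group W] {M : CoxeterMatrix (Fin n)}

/-- The orbit of a point `h` under the Weyl group. -/
def orb (K : KMWeyl n V W M) (h : V) : Set V := Set.range fun w => K.ρ w h

/-- The standard subgroup generated by the simple reflections indexed by `J`. -/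
def std (K : KMWeyl n V W M) (J : Set (Fin n)) : Subgroup W :=
  Subgroup.closure (K.cs.simple '' J)

/-- The support of `w`: the indices occurring in every reduced word for `w`. -/
def supp (K : KMWeyl n V W M) (w : W) : Set (Fin n) :=
  {i | ∀ l : List (Fin n), K.cs.wordProd l = w → l.length = K.cs.length w → i ∈ l}

variable (K : KMWeyl n V W M)

lemma rho_simple_cor (t r : Fin n) :
    K.ρ (K.cs.simple t) (K.cor r) = K.cor r - (K.A r t : ℝ) • K.cor t := by
  rw [K.refl, K.pairing]

lemma rho_mul_apply (a b : W) (v : V) : K.ρ (a * b) v = K.ρ a (K.ρ b v) := by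
  rw [map_mul]; rfl

/-- The nonnegative cone spanned by the coroots. -/
def Pos : Set V := {x | ∃ c : Fin n → ℝ, (∀ k, 0 ≤ c k) ∧ x = ∑ k, c k • K.cor k}

lemma cor_mem_Pos (t : Fin n) : K.cor t ∈ K.Pos := by
  refine ⟨fun k => if k = t then 1 else 0, fun k => by positivity, ?_⟩
  simp [ite_smul]

lemma Pos.add {x y : V} (hx : x ∈ K.Pos) (hy : y ∈ K.Pos) : x + y ∈ K.Pos := by
  obtain ⟨c, hc, rfl⟩ := hx
  obtain ⟨d, hd, rfl⟩ := hy
  exact ⟨c + d, fun k => add_nonneg (hc k) (hd k), by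
    simp [add_smul, Finset.sum_add_distrib]⟩

lemma Pos.smul {x : V} {r : ℝ} (hr : 0 ≤ r) (hx : x ∈ K.Pos) : r • x ∈ K.Pos := by
  obtain ⟨c, hc, rfl⟩ := hx
  exact ⟨fun k => r * c k, fun k => mul_nonneg hr (hc k), by
    simp [Finset.smul_sum, mul_smul]⟩

section Dihedral

/-- Any word can be replaced by a word with no adjacent equal letters, with the same
product, smaller length, and letters from the original word. -/
lemma exists_chain_word : ∀ (N : ℕ) (l : List (Fin n)), l.length ≤ N →
    ∃ l' : List (Fin n), l'.length ≤ l.length ∧ K.cs.wordProd l' = K.cs.wordProd l ∧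
      (∀ t ∈ l', t ∈ l) ∧ l'.Chain' (· ≠ ·) := by
  intro N
  induction N with
  | zero =>
    intro l hl
    rw [Nat.le_zero, List.length_eq_zero_iff] at hl
    exact ⟨[], by simp [hl, List.Chain']⟩
  | succ N ih =>
    intro l hl
    match l with
    | [] => exact ⟨[], by simp [List.Chain']⟩
    | a :: rest =>
      obtain ⟨r', hr'len, hr'prod, hr'mem, hr'chain⟩ := ih rest (by simp at hl; omega)
      rcases r' with _ | ⟨b, rtail⟩
      · refine ⟨[a], by simp, ?_, by simp, by simp [List.Chain']⟩
        simp [CoxeterSystem.wordProd_cons, ← hr'prod]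
      · by_cases hab : a = b
        · -- cancel a and b
          subst hab
          have hcancel : K.cs.wordProd (a :: rest) = K.cs.wordProd rtail := by
            rw [CoxeterSystem.wordProd_cons, ← hr'prod, CoxeterSystem.wordProd_cons,
              ← mul_assoc, K.cs.simple_mul_simple_self, one_mul]
          obtain ⟨l'', h1, h2, h3, h4⟩ := ih rtail (by
            simp at hr'len hl; omega)
          refine ⟨l'', ?_, by rw [h2, hcancel], ?_, h4⟩
          · simp at hr'len ⊢; omega
          · intro t ht
            exact List.mem_cons_of_mem _ (hr'mem t (List.mem_cons_of_mem _ (h3 t ht)))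
        · refine ⟨a :: b :: rtail, by simpa using hr'len, ?_, ?_, ?_⟩
          · rw [CoxeterSystem.wordProd_cons, hr'prod, CoxeterSystem.wordProd_cons]
          · intro t ht
            rcases List.mem_cons.mp ht with h | h
            · exact h ▸ List.mem_cons_self
            · exact List.mem_cons_of_mem _ (hr'mem t h)
          · rw [List.Chain', List.isChain_cons_cons]
            exact ⟨hab, hr'chain⟩

open CoxeterSystem in
/-- A word with no adjacent equal letters, over a two-letter alphabet, is an
alternating word. -/
lemma chain_eq_alt (j k : Fin n) (hjk : j ≠ k) :
    ∀ l : List (Fin n), (∀ t ∈ l, t = j ∨ t = k) → l.Chain' (· ≠ ·) →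
      l = alternatingWord k j l.length ∨ l = alternatingWord j k l.length := by
  intro l
  induction l with
  | nil => intro _ _; left; rfl
  | cons a rest ih =>
    intro halpha hchain
    have hrest := ih (fun t ht => halpha t (List.mem_cons_of_mem _ ht))
      (List.IsChain.tail hchain)
    have ha := halpha a (List.mem_cons_self)
    rcases rest with _ | ⟨b, rtail⟩
    · rcases ha with rfl | rfl
      · left; rfl
      · right; rfl
    · have hab : a ≠ b := List.isChain_cons_cons.mp hchain |>.1
      have hblen : (b :: rtail).length = rtail.length + 1 := by simp
      set s := rtail.length with hs
      have key : ∀ x y : Fin n, (a = x ∨ a = y) → (b :: rtail) = alternatingWord x y (s+1) →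
          (a :: b :: rtail) = alternatingWord x y (s+2) := by
        intro x y ha' hrw
        have hb : b = (if Even s then y else x) := by
          rw [alternatingWord_succ'] at hrw
          exact (List.cons.injEq _ _ _ _).mp hrw |>.1
        have hxy' : a = (if Even (s+1) then y else x) := by
          rcases Nat.even_or_odd s with he | ho
          · have hb' : b = y := by simpa [he] using hb
            have hne : ¬ Even (s+1) := by simp [Nat.even_add_one, he]
            simp only [if_neg hne]
            rcases ha' with rfl | rfl
            · rfl
            · exact absurd hb'.symm hab
          · have hes : ¬ Even s := Nat.not_even_iff_odd.mpr ho
            have hb' : b = x := by simpa [hes] using hb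
            have he1 : Even (s+1) := by simp [Nat.even_add_one, hes]
            simp only [if_pos he1]
            rcases ha' with rfl | rfl
            · exact absurd hb'.symm hab
            · rfl
        rw [alternatingWord_succ' x y (s+1), ← hxy', ← hrw]
      rcases hrest with hrw | hrw
      · left
        have : (b :: rtail).length = s + 1 := hblen
        rw [this] at hrw
        simpa using key k j (ha.symm) hrw
      · right
        have : (b :: rtail).length = s + 1 := hblen
        rw [this] at hrw
        simpa using key j k ha hrw


/-- Coefficient recursion for the action of alternating words on a coroot. -/
def altCoef (u q : ℝ) : ℕ → ℝ × ℝ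
  | 0 => (1, 0)
  | (m+1) => if Even m then ((altCoef u q m).1, u * (altCoef u q m).1 - (altCoef u q m).2)
             else (q * (altCoef u q m).2 - (altCoef u q m).1, (altCoef u q m).2)

open CoxeterSystem in
lemma altCoef_spec (j k : Fin n) (hjk : j ≠ k) : ∀ m : ℕ,
    K.ρ (K.cs.wordProd (alternatingWord j k m)) (K.cor j) =
      (altCoef (-(K.A j k : ℝ)) (-(K.A k j : ℝ)) m).1 • K.cor j +
      (altCoef (-(K.A j k : ℝ)) (-(K.A k j : ℝ)) m).2 • K.cor k := by
  intro m
  induction m with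
  | zero =>
    rw [show CoxeterSystem.alternatingWord j k 0 = [] from rfl, CoxeterSystem.wordProd_nil,
      map_one]
    simp [altCoef]
  | succ m ih =>
    rw [alternatingWord_succ', CoxeterSystem.wordProd_cons, K.rho_mul_apply, ih]
    by_cases he : Even m
    · simp only [if_pos he, altCoef, map_add, map_smul, K.refl]
      have h1 : K.α k (K.cor j) = (K.A j k : ℝ) := K.pairing j k
      have h2 : K.α k (K.cor k) = (K.A k k : ℝ) := K.pairing k k
      rw [K.diag] at h2
      set a := (altCoef (-(K.A j k : ℝ)) (-(K.A k j : ℝ)) m).1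
      set b := (altCoef (-(K.A j k : ℝ)) (-(K.A k j : ℝ)) m).2
      simp only [map_add, map_smul, h1, h2, smul_eq_mul]
      push_cast
      module
    · simp only [if_neg he, altCoef, map_add, map_smul, K.refl]
      have h1 : K.α j (K.cor k) = (K.A k j : ℝ) := K.pairing k j
      have h2 : K.α j (K.cor j) = (K.A j j : ℝ) := K.pairing j j
      rw [K.diag] at h2
      set a := (altCoef (-(K.A j k : ℝ)) (-(K.A k j : ℝ)) m).1
      set b := (altCoef (-(K.A j k : ℝ)) (-(K.A k j : ℝ)) m).2
      simp only [map_add, map_smul, h1, h2, smul_eq_mul]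
      push_cast
      module

lemma altCoef_nonneg_big (u q : ℝ) (hu : 0 ≤ u) (hq : 0 ≤ q) (h4 : 4 ≤ u * q) :
    ∀ m, 0 ≤ (altCoef u q m).1 ∧ 0 ≤ (altCoef u q m).2 ∧
      (Even m → 2 * (altCoef u q m).2 ≤ u * (altCoef u q m).1) ∧
      (¬ Even m → 2 * (altCoef u q m).1 ≤ q * (altCoef u q m).2) := by
  intro m
  induction m with
  | zero =>
    refine ⟨by norm_num [altCoef], by norm_num [altCoef], ?_, ?_⟩
    · intro _; norm_num [altCoef]; linarith
    · intro h; exact absurd Even.zero h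
  | succ m ih =>
    obtain ⟨ha, hb, hinv1, hinv2⟩ := ih
    set a := (altCoef u q m).1
    set b := (altCoef u q m).2
    by_cases he : Even m
    · have h1 := hinv1 he
      have hne : ¬ Even (m+1) := by simp [Nat.even_add_one, he]
      refine ⟨?_, ?_, fun h => absurd h hne, fun _ => ?_⟩
      · simp only [altCoef, if_pos he]; exact ha
      · simp only [altCoef, if_pos he]; linarith
      · simp only [altCoef, if_pos he]
        nlinarith [mul_nonneg hq (show (0:ℝ) ≤ u*a - 2*b by linarith),
          mul_nonneg ha (show (0:ℝ) ≤ u*q - 4 by linarith)]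
    · have h1 := hinv2 he
      have hye : Even (m+1) := by simp [Nat.even_add_one, he]
      refine ⟨?_, ?_, fun _ => ?_, fun h => absurd hye h⟩
      · simp only [altCoef, if_neg he]; linarith
      · simp only [altCoef, if_neg he]; exact hb
      · simp only [altCoef, if_neg he]
        nlinarith [mul_nonneg hu (show (0:ℝ) ≤ q*b - 2*a by linarith),
          mul_nonneg hb (show (0:ℝ) ≤ u*q - 4 by linarith)]

lemma altCoef_nonneg_table (u q : ℝ) (m : ℕ)
    (h : (u = 0 ∧ q = 0 ∧ m < 2) ∨ (u = 1 ∧ q = 1 ∧ m < 3) ∨ (u = 1 ∧ q = 2 ∧ m < 4) ∨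
      (u = 2 ∧ q = 1 ∧ m < 4) ∨ (u = 1 ∧ q = 3 ∧ m < 6) ∨ (u = 3 ∧ q = 1 ∧ m < 6)) :
    0 ≤ (altCoef u q m).1 ∧ 0 ≤ (altCoef u q m).2 := by
  rcases h with ⟨rfl, rfl, hm⟩ | ⟨rfl, rfl, hm⟩ | ⟨rfl, rfl, hm⟩ | ⟨rfl, rfl, hm⟩ |
    ⟨rfl, rfl, hm⟩ | ⟨rfl, rfl, hm⟩ <;>
    interval_cases m <;> norm_num [altCoef, Nat.even_iff]


open CoxeterSystem in
lemma rank2 (j k : Fin n) (hjk : j ≠ k) (l : List (Fin n))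
    (hIl : ∀ t ∈ l, t = j ∨ t = k)
    (hred : K.cs.length (K.cs.wordProd l) = l.length)
    (hasc : K.cs.length (K.cs.wordProd l * K.cs.simple j) = l.length + 1) :
    ∃ a b : ℝ, 0 ≤ a ∧ 0 ≤ b ∧
      K.ρ (K.cs.wordProd l) (K.cor j) = a • K.cor j + b • K.cor k := by
  obtain ⟨c, hclen, hcprod, hcmem, hcchain⟩ := K.exists_chain_word l.length l le_rfl
  have hclen' : c.length = l.length := by
    have h1 : l.length ≤ c.length := by
      calc l.length = K.cs.length (K.cs.wordProd c) := by rw [hcprod, hred]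
      _ ≤ c.length := K.cs.length_wordProd_le c
    omega
  have hIc : ∀ t ∈ c, t = j ∨ t = k := fun t ht => hIl t (hcmem t ht)
  rw [← hclen'] at hred hasc
  rw [← hcprod] at hred hasc ⊢
  clear hcprod hclen hclen' hIl
  set m := c.length with hm
  have hujk : (0:ℝ) ≤ -(K.A j k : ℝ) := by
    rw [neg_nonneg]
    exact_mod_cast K.offDiag j k hjk
  have hukj : (0:ℝ) ≤ -(K.A k j : ℝ) := by
    rw [neg_nonneg]
    exact_mod_cast K.offDiag k j (Ne.symm hjk)
  rcases chain_eq_alt j k hjk c hIc hcchain with hc | hc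
  · -- c = alternatingWord k j m : ends with j unless m = 0
    rcases Nat.eq_zero_or_pos m with h0 | hpos
    · rw [hc, ← hm, h0]
      rw [show alternatingWord k j 0 = ([] : List (Fin n)) from rfl,
        CoxeterSystem.wordProd_nil, map_one]
      exact ⟨1, 0, by norm_num, by norm_num, by simp⟩
    · exfalso
      obtain ⟨m', hm'⟩ : ∃ m', m = m' + 1 := ⟨m - 1, by omega⟩
      have hsplit : K.cs.wordProd c * K.cs.simple j
          = K.cs.wordProd (alternatingWord j k m') := by
        rw [hc, ← hm, hm', alternatingWord_succ, CoxeterSystem.wordProd_concat, mul_assoc,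
          K.cs.simple_mul_simple_self, mul_one]
      have hle := K.cs.length_wordProd_le (alternatingWord j k m')
      rw [← hsplit, hasc, length_alternatingWord] at hle
      omega
  · -- c = alternatingWord j k m
    by_cases hM0 : M j k = 0
    · -- infinite case
      have hp4 : (4:ℤ) ≤ K.A j k * K.A k j := by
        have hcox := K.coxMat j k hjk
        rw [hM0] at hcox
        have hnn : (0:ℤ) ≤ K.A j k * K.A k j := by
          nlinarith [K.offDiag j k hjk, K.offDiag k j (Ne.symm hjk)]
        by_contra hlt
        push_neg at hlt
        have h03 : K.A j k * K.A k j = 0 ∨ K.A j k * K.A k j = 1 ∨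
            K.A j k * K.A k j = 2 ∨ K.A j k * K.A k j = 3 := by omega
        rcases h03 with h | h | h | h <;> rw [h] at hcox <;> simp [gcmCoxeterEntry] at hcox
      have h4 : (4:ℝ) ≤ (-(K.A j k : ℝ)) * (-(K.A k j : ℝ)) := by
        rw [neg_mul_neg]
        exact_mod_cast hp4
      obtain ⟨h1, h2, _, _⟩ := altCoef_nonneg_big _ _ hujk hukj h4 m
      exact ⟨_, _, h1, h2, by rw [hc, ← hm]; exact K.altCoef_spec j k hjk m⟩
    · -- finite case: first show m < M j k
      have hmlt : m < M j k := by
        rcases lt_trichotomy m (M j k) with h | h | h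
        · exact h
        · -- m = M j k : use the braid relation, word also ends in j
          exfalso
          have hbraid := K.cs.wordProd_braidWord_eq j k
          obtain ⟨m', hm'⟩ : ∃ m', M j k = m' + 1 := ⟨M j k - 1, by omega⟩
          have hsplit : K.cs.wordProd c * K.cs.simple j
              = K.cs.wordProd (alternatingWord j k m') := by
            have hbw : braidWord M k j = alternatingWord k j (M j k) := by
              show alternatingWord k j (M k j) = _
              rw [M.symmetric k j]
            rw [hc, ← hm, h]
            show K.cs.wordProd (braidWord M j k) * K.cs.simple j = _
            rw [hbraid, hbw, hm', alternatingWord_succ, CoxeterSystem.wordProd_concat, mul_assoc,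
              K.cs.simple_mul_simple_self, mul_one]
          have hle := K.cs.length_wordProd_le (alternatingWord j k m')
          rw [← hsplit, hasc, length_alternatingWord] at hle
          omega
        · exfalso
          have hnr := K.cs.not_isReduced_alternatingWord j k hM0 h
          apply hnr
          show K.cs.length (K.cs.wordProd (alternatingWord j k m)) = (alternatingWord j k m).length
          rw [hm, ← hc, hred]
      -- bound the Cartan entries
      have hcox := K.coxMat j k hjk
      have hnn : (0:ℤ) ≤ K.A j k * K.A k j := by
        nlinarith [K.offDiag j k hjk, K.offDiag k j (Ne.symm hjk)]
      have hPle : K.A j k * K.A k j ≤ 3 := by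
        by_contra hgt
        push_neg at hgt
        have : gcmCoxeterEntry (K.A j k * K.A k j) = 0 := by
          unfold gcmCoxeterEntry
          rw [if_neg (by omega), if_neg (by omega), if_neg (by omega), if_neg (by omega)]
        rw [this] at hcox
        exact hM0 hcox
      set x : ℤ := -(K.A j k) with hxdef
      set y : ℤ := -(K.A k j) with hydef
      have hx0 : 0 ≤ x := neg_nonneg.mpr (K.offDiag j k hjk)
      have hy0 : 0 ≤ y := neg_nonneg.mpr (K.offDiag k j (Ne.symm hjk))
      have hxy : x * y = K.A j k * K.A k j := by rw [hxdef, hydef]; ring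
      have hPcases : K.A j k * K.A k j = 0 ∨ K.A j k * K.A k j = 1 ∨
          K.A j k * K.A k j = 2 ∨ K.A j k * K.A k j = 3 := by omega
      rcases hPcases with hP | hP | hP | hP
      · -- p = 0, M = 2
        have hMv : M j k = 2 := by rw [hP] at hcox; simpa [gcmCoxeterEntry] using hcox
        have hAjk : K.A j k = 0 := by
          rcases mul_eq_zero.mp (hxy.trans hP) with h | h
          · omega
          · have : K.A k j = 0 := by omega
            have := (K.zeroIff k j).mp this
            omega
        have hAkj : K.A k j = 0 := (K.zeroIff j k).mp hAjk
        have hu : -(K.A j k : ℝ) = 0 := by rw [hAjk]; norm_num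
        have hq : -(K.A k j : ℝ) = 0 := by rw [hAkj]; norm_num
        obtain ⟨h1, h2⟩ := altCoef_nonneg_table (-(K.A j k : ℝ)) (-(K.A k j : ℝ)) m
          (Or.inl ⟨hu, hq, by omega⟩)
        exact ⟨_, _, h1, h2, by rw [hc, ← hm]; exact K.altCoef_spec j k hjk m⟩
      · -- p = 1, M = 3
        have hMv : M j k = 3 := by rw [hP] at hcox; simpa [gcmCoxeterEntry] using hcox
        have hxy1 : x * y = 1 := hxy.trans hP
        have hy1 : 1 ≤ y := by
          rcases eq_or_lt_of_le hy0 with h | h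
          · rw [← h] at hxy1; simp at hxy1
          · omega
        have hxle : x ≤ 1 := by nlinarith
        have hx1 : 1 ≤ x := by nlinarith
        have hxv : x = 1 := by omega
        have hyv : y = 1 := by rw [hxv, one_mul] at hxy1; omega
        have hu : -(K.A j k : ℝ) = 1 := by rw [show K.A j k = -1 by omega]; norm_num
        have hq : -(K.A k j : ℝ) = 1 := by rw [show K.A k j = -1 by omega]; norm_num
        obtain ⟨h1, h2⟩ := altCoef_nonneg_table (-(K.A j k : ℝ)) (-(K.A k j : ℝ)) m
          (Or.inr (Or.inl ⟨hu, hq, by omega⟩))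
        exact ⟨_, _, h1, h2, by rw [hc, ← hm]; exact K.altCoef_spec j k hjk m⟩
      · -- p = 2, M = 4
        have hMv : M j k = 4 := by rw [hP] at hcox; simpa [gcmCoxeterEntry] using hcox
        have hxy1 : x * y = 2 := hxy.trans hP
        have hy1 : 1 ≤ y := by
          rcases eq_or_lt_of_le hy0 with h | h
          · rw [← h] at hxy1; simp at hxy1
          · omega
        have hx1 : 1 ≤ x := by nlinarith
        have hxle : x ≤ 2 := by nlinarith
        interval_cases x
        · have hyv : y = 2 := by omega
          have hu : -(K.A j k : ℝ) = 1 := by rw [show K.A j k = -1 by omega]; norm_num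
          have hq : -(K.A k j : ℝ) = 2 := by rw [show K.A k j = -2 by omega]; norm_num
          obtain ⟨h1, h2⟩ := altCoef_nonneg_table (-(K.A j k : ℝ)) (-(K.A k j : ℝ)) m
            (Or.inr (Or.inr (Or.inl ⟨hu, hq, by omega⟩)))
          exact ⟨_, _, h1, h2, by rw [hc, ← hm]; exact K.altCoef_spec j k hjk m⟩
        · have hyv : y = 1 := by omega
          have hu : -(K.A j k : ℝ) = 2 := by rw [show K.A j k = -2 by omega]; norm_num
          have hq : -(K.A k j : ℝ) = 1 := by rw [show K.A k j = -1 by omega]; norm_num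
          obtain ⟨h1, h2⟩ := altCoef_nonneg_table (-(K.A j k : ℝ)) (-(K.A k j : ℝ)) m
            (Or.inr (Or.inr (Or.inr (Or.inl ⟨hu, hq, by omega⟩))))
          exact ⟨_, _, h1, h2, by rw [hc, ← hm]; exact K.altCoef_spec j k hjk m⟩
      · -- p = 3, M = 6
        have hMv : M j k = 6 := by rw [hP] at hcox; simpa [gcmCoxeterEntry] using hcox
        have hxy1 : x * y = 3 := hxy.trans hP
        have hy1 : 1 ≤ y := by
          rcases eq_or_lt_of_le hy0 with h | h
          · rw [← h] at hxy1; simp at hxy1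
          · omega
        have hx1 : 1 ≤ x := by nlinarith
        have hxle : x ≤ 3 := by nlinarith
        interval_cases x
        · have hyv : y = 3 := by omega
          have hu : -(K.A j k : ℝ) = 1 := by rw [show K.A j k = -1 by omega]; norm_num
          have hq : -(K.A k j : ℝ) = 3 := by rw [show K.A k j = -3 by omega]; norm_num
          obtain ⟨h1, h2⟩ := altCoef_nonneg_table (-(K.A j k : ℝ)) (-(K.A k j : ℝ)) m
            (Or.inr (Or.inr (Or.inr (Or.inr (Or.inl ⟨hu, hq, by omega⟩)))))
          exact ⟨_, _, h1, h2, by rw [hc, ← hm]; exact K.altCoef_spec j k hjk m⟩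
        · exfalso; omega
        · have hyv : y = 1 := by omega
          have hu : -(K.A j k : ℝ) = 3 := by rw [show K.A j k = -3 by omega]; norm_num
          have hq : -(K.A k j : ℝ) = 1 := by rw [show K.A k j = -1 by omega]; norm_num
          obtain ⟨h1, h2⟩ := altCoef_nonneg_table (-(K.A j k : ℝ)) (-(K.A k j : ℝ)) m
            (Or.inr (Or.inr (Or.inr (Or.inr (Or.inr ⟨hu, hq, by omega⟩)))))
          exact ⟨_, _, h1, h2, by rw [hc, ← hm]; exact K.altCoef_spec j k hjk m⟩


lemma decomp (j k : Fin n) : ∀ (N : ℕ) (w : W), K.cs.length w ≤ N →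
    ∃ (u : W) (l : List (Fin n)), (∀ t ∈ l, t = j ∨ t = k) ∧ w = u * K.cs.wordProd l ∧
      K.cs.length u + l.length = K.cs.length w ∧
      K.cs.length (K.cs.wordProd l) = l.length ∧
      ¬ K.cs.IsRightDescent u j ∧ ¬ K.cs.IsRightDescent u k := by
  intro N
  induction N with
  | zero =>
    intro w hw
    have hw1 : w = 1 := K.cs.length_eq_zero_iff.mp (Nat.le_zero.mp hw)
    subst hw1
    exact ⟨1, [], by simp, by simp [CoxeterSystem.wordProd_nil],
      by simp [CoxeterSystem.wordProd_nil], by simp [CoxeterSystem.wordProd_nil],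
      K.cs.not_isRightDescent_one j, K.cs.not_isRightDescent_one k⟩
  | succ N ih =>
    intro w hw
    by_cases hdj : K.cs.IsRightDescent w j
    case neg =>
      by_cases hdk : K.cs.IsRightDescent w k
      case neg =>
        exact ⟨w, [], by simp, by simp [CoxeterSystem.wordProd_nil],
          by simp [CoxeterSystem.wordProd_nil], by simp [CoxeterSystem.wordProd_nil], hdj, hdk⟩
      case pos =>
        have hlen : K.cs.length (w * K.cs.simple k) + 1 = K.cs.length w :=
          (K.cs.isRightDescent_iff).mp hdk
        obtain ⟨u, l', hIl, hwul, hadd, hredl, huj, huk⟩ := ih (w * K.cs.simple k) (by omega)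
        refine ⟨u, l'.concat k, ?_, ?_, ?_, ?_, huj, huk⟩
        · intro t ht
          rw [List.concat_eq_append, List.mem_append] at ht
          rcases ht with h | h
          · exact hIl t h
          · right; simpa using h
        · rw [CoxeterSystem.wordProd_concat, ← mul_assoc, ← hwul, mul_assoc,
            K.cs.simple_mul_simple_self, mul_one]
        · rw [List.length_concat]
          omega
        · have hle : K.cs.length (K.cs.wordProd (l'.concat k)) ≤ l'.length + 1 := by
            have := K.cs.length_wordProd_le (l'.concat k)
            rwa [List.length_concat] at this
          have hge : l'.length + 1 ≤ K.cs.length (K.cs.wordProd (l'.concat k)) := by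
            have h1 : w = u * K.cs.wordProd (l'.concat k) := by
              rw [CoxeterSystem.wordProd_concat, ← mul_assoc, ← hwul, mul_assoc,
                K.cs.simple_mul_simple_self, mul_one]
            have h2 := K.cs.length_mul_le u (K.cs.wordProd (l'.concat k))
            rw [← h1] at h2
            omega
          rw [List.length_concat]
          omega
    case pos =>
      have hlen : K.cs.length (w * K.cs.simple j) + 1 = K.cs.length w :=
        (K.cs.isRightDescent_iff).mp hdj
      obtain ⟨u, l', hIl, hwul, hadd, hredl, huj, huk⟩ := ih (w * K.cs.simple j) (by omega)
      refine ⟨u, l'.concat j, ?_, ?_, ?_, ?_, huj, huk⟩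
      · intro t ht
        rw [List.concat_eq_append, List.mem_append] at ht
        rcases ht with h | h
        · exact hIl t h
        · left; simpa using h
      · rw [CoxeterSystem.wordProd_concat, ← mul_assoc, ← hwul, mul_assoc,
          K.cs.simple_mul_simple_self, mul_one]
      · rw [List.length_concat]
        omega
      · have hle : K.cs.length (K.cs.wordProd (l'.concat j)) ≤ l'.length + 1 := by
          have := K.cs.length_wordProd_le (l'.concat j)
          rwa [List.length_concat] at this
        have hge : l'.length + 1 ≤ K.cs.length (K.cs.wordProd (l'.concat j)) := by
          have h1 : w = u * K.cs.wordProd (l'.concat j) := by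
            rw [CoxeterSystem.wordProd_concat, ← mul_assoc, ← hwul, mul_assoc,
              K.cs.simple_mul_simple_self, mul_one]
          have h2 := K.cs.length_mul_le u (K.cs.wordProd (l'.concat j))
          rw [← h1] at h2
          omega
        rw [List.length_concat]
        omega

/-- Main positivity theorem: if `j` is not a right descent of `w`, then `w` maps the
`j`-th coroot into the nonnegative cone spanned by the coroots. -/
theorem posRoot : ∀ (w : W) (j : Fin n), ¬ K.cs.IsRightDescent w j →
    K.ρ w (K.cor j) ∈ K.Pos := by
  have main : ∀ (N : ℕ) (w : W), K.cs.length w ≤ N → ∀ j, ¬ K.cs.IsRightDescent w j →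
      K.ρ w (K.cor j) ∈ K.Pos := by
    intro N
    induction N with
    | zero =>
      intro w hw j _
      have hw1 : w = 1 := K.cs.length_eq_zero_iff.mp (Nat.le_zero.mp hw)
      subst hw1
      rw [map_one]
      exact K.cor_mem_Pos j
    | succ N ih =>
      intro w hw j hdj
      by_cases hw1 : w = 1
      · subst hw1
        rw [map_one]
        exact K.cor_mem_Pos j
      · obtain ⟨k, hk⟩ := K.cs.exists_rightDescent_of_ne_one hw1
        have hjk : j ≠ k := by rintro rfl; exact hdj hk
        obtain ⟨u, l, hIl, hwul, hlen, hredl, huj, huk⟩ :=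
          K.decomp j k (K.cs.length w) w le_rfl
        have hlne : l ≠ [] := by
          rintro rfl
          rw [CoxeterSystem.wordProd_nil, mul_one] at hwul
          exact huk (hwul ▸ hk)
        have hlpos : 0 < l.length := List.length_pos_iff.mpr hlne
        have hulen : K.cs.length u ≤ N := by omega
        have hdj' : K.cs.length (w * K.cs.simple j) = K.cs.length w + 1 := by
          rcases K.cs.length_mul_simple w j with h | h
          · exact h
          · exact absurd ((K.cs.isRightDescent_iff).mpr h) hdj
        have hvasc : K.cs.length (K.cs.wordProd l * K.cs.simple j) = l.length + 1 := by
          have hub : K.cs.length (K.cs.wordProd l * K.cs.simple j) ≤ l.length + 1 := by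
            have h1 := K.cs.length_mul_le (K.cs.wordProd l) (K.cs.simple j)
            rw [hredl, K.cs.length_simple] at h1
            exact h1
          have hlb : l.length + 1 ≤ K.cs.length (K.cs.wordProd l * K.cs.simple j) := by
            have h1 : w * K.cs.simple j = u * (K.cs.wordProd l * K.cs.simple j) := by
              rw [hwul, mul_assoc]
            have h2 := K.cs.length_mul_le u (K.cs.wordProd l * K.cs.simple j)
            rw [← h1, hdj'] at h2
            omega
          omega
        obtain ⟨a, b, ha, hb, hvact⟩ := K.rank2 j k hjk l hIl hredl hvasc
        have heq : K.ρ w (K.cor j) = a • K.ρ u (K.cor j) + b • K.ρ u (K.cor k) := by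
          rw [hwul, K.rho_mul_apply, hvact, map_add, map_smul, map_smul]
        rw [heq]
        exact Pos.add K (Pos.smul K ha (ih u hulen j huj)) (Pos.smul K hb (ih u hulen k huk))
  intro w j hd
  exact main (K.cs.length w) w le_rfl j hd

end Dihedral

section Endgame

variable (i : Fin n) (ω : Fin n → (V →ₗ[ℝ] ℝ))

lemma omega_nonneg_of_Pos (hω : ∀ i j, ω i (K.cor j) = if i = j then 1 else 0)
    {x : V} (hx : x ∈ K.Pos) : 0 ≤ ω i x := by
  obtain ⟨c, hc, rfl⟩ := hx
  rw [map_sum]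
  apply Finset.sum_nonneg
  intro k _
  rw [map_smul, smul_eq_mul, hω]
  split_ifs <;> simp [hc k]

lemma omega_cone (hC : ∀ j, 0 < K.α j h) : True := trivial

/-- The functional `ω i ∘ ρ w` equals `ω i` minus a nonnegative combination of the
simple roots. -/
lemma omega_sub_cone (hω : ∀ i j, ω i (K.cor j) = if i = j then 1 else 0) :
    ∀ (N : ℕ) (w : W), K.cs.length w ≤ N → ∃ c : Fin n → ℝ, (∀ k, 0 ≤ c k) ∧
      ∀ v, ω i (K.ρ w v) = ω i v - ∑ k, c k * K.α k v := by
  intro N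
  induction N with
  | zero =>
    intro w hw
    have hw1 : w = 1 := K.cs.length_eq_zero_iff.mp (Nat.le_zero.mp hw)
    subst hw1
    exact ⟨0, by simp, by simp⟩
  | succ N ih =>
    intro w hw
    by_cases hw1 : w = 1
    · subst hw1; exact ⟨0, by simp, by simp⟩
    · obtain ⟨k0, hk0⟩ := K.cs.exists_rightDescent_of_ne_one hw1
      have hlen : K.cs.length (w * K.cs.simple k0) + 1 = K.cs.length w :=
        (K.cs.isRightDescent_iff).mp hk0
      set w' := w * K.cs.simple k0 with hw'
      have hww : w = w' * K.cs.simple k0 := by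
        rw [hw', mul_assoc, K.cs.simple_mul_simple_self, mul_one]
      have hndesc : ¬ K.cs.IsRightDescent w' k0 := by
        rw [K.cs.isRightDescent_iff, ← hww]
        omega
      have hd : 0 ≤ ω i (K.ρ w' (K.cor k0)) :=
        K.omega_nonneg_of_Pos i ω hω (K.posRoot w' k0 hndesc)
      obtain ⟨c', hc'0, hc'⟩ := ih w' (by omega)
      set d := ω i (K.ρ w' (K.cor k0)) with hdd
      refine ⟨fun k => c' k + (if k = k0 then d else 0), ?_, ?_⟩
      · intro k
        have : (0:ℝ) ≤ if k = k0 then d else 0 := by split_ifs <;> simp [hd]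
        exact add_nonneg (hc'0 k) this
      · intro v
        have hstep : K.ρ w v = K.ρ w' v - K.α k0 v • K.ρ w' (K.cor k0) := by
          rw [hww, K.rho_mul_apply, K.refl, map_sub, map_smul]
        rw [hstep, map_sub, map_smul, hc' v, smul_eq_mul]
        rw [Finset.sum_congr rfl
          (fun k _ => add_mul (c' k) (if k = k0 then d else 0) (K.α k v)),
          Finset.sum_add_distrib]
        have : ∑ k, (if k = k0 then d else 0) * K.α k v = d * K.α k0 v := by
          simp [ite_mul]
        rw [this]
        ring

/-- Integrality: the functional `ω i ∘ ρ w` lies in `ω i` plus the integer span of the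
simple roots. -/
lemma omega_lattice (hω : ∀ i j, ω i (K.cor j) = if i = j then 1 else 0) :
    ∀ (l : List (Fin n)),
      (∃ z : Fin n → ℤ, ∀ v, ω i (K.ρ (K.cs.wordProd l) v)
          = ω i v + ∑ k, (z k : ℝ) * K.α k v) ∧
      (∀ t : Fin n, ∃ z : Fin n → ℤ, ∀ v, K.α t (K.ρ (K.cs.wordProd l) v)
          = ∑ k, (z k : ℝ) * K.α k v) := by
  intro l
  induction l with
  | nil =>
    constructor
    · exact ⟨0, by simp [CoxeterSystem.wordProd_nil]⟩
    · intro t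
      refine ⟨fun k => if k = t then 1 else 0, ?_⟩
      intro v
      rw [CoxeterSystem.wordProd_nil, map_one]
      have : ∀ k, ((if k = t then (1:ℤ) else 0 : ℤ) : ℝ) * K.α k v
          = if k = t then K.α k v else 0 := by
        intro k; split_ifs <;> simp
      rw [Finset.sum_congr rfl (fun k _ => this k)]
      simp [Module.End.one_apply]
  | cons t l' ihl =>
    obtain ⟨⟨z1, hz1⟩, hsec⟩ := ihl
    have hexp : ∀ v, K.ρ (K.cs.wordProd (t :: l')) v
        = K.ρ (K.cs.wordProd l') v - K.α t (K.ρ (K.cs.wordProd l') v) • K.cor t := by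
      intro v
      rw [CoxeterSystem.wordProd_cons, K.rho_mul_apply, K.refl]
    obtain ⟨zt, hzt⟩ := hsec t
    constructor
    · refine ⟨fun k => z1 k - (if i = t then 1 else 0) * zt k, ?_⟩
      intro v
      rw [hexp v, map_sub, map_smul, smul_eq_mul, hz1 v, hzt v, hω]
      push_cast
      rw [Finset.sum_congr rfl (fun k _ => by ring_nf :
        ∀ k ∈ Finset.univ, ((z1 k : ℝ) - (if i = t then (1:ℝ) else 0) * (zt k : ℝ)) * K.α k v
          = (z1 k : ℝ) * K.α k v - (if i = t then (1:ℝ) else 0) * ((zt k : ℝ) * K.α k v))]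
      rw [Finset.sum_sub_distrib, ← Finset.mul_sum]
      split_ifs <;> ring
    · intro r
      obtain ⟨zr, hzr⟩ := hsec r
      refine ⟨fun k => zr k - (K.A t r) * zt k, ?_⟩
      intro v
      rw [hexp v, map_sub, map_smul, smul_eq_mul, hzr v, hzt v, K.pairing]
      push_cast
      rw [Finset.sum_congr rfl (fun k _ => by ring_nf :
        ∀ k ∈ Finset.univ, ((zr k : ℝ) - (K.A t r : ℝ) * (zt k : ℝ)) * K.α k v
          = (zr k : ℝ) * K.α k v - (K.A t r : ℝ) * ((zt k : ℝ) * K.α k v))]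
      rw [Finset.sum_sub_distrib, ← Finset.mul_sum]
      ring

/-- Combination: nonnegative integer coefficients. -/
lemma omega_nat (hω : ∀ i j, ω i (K.cor j) = if i = j then 1 else 0) (w : W) :
    ∃ m : Fin n → ℕ, ∀ v, ω i (K.ρ w v) = ω i v - ∑ k, (m k : ℝ) * K.α k v := by
  obtain ⟨c, hc0, hc⟩ := K.omega_sub_cone i ω hω (K.cs.length w) w le_rfl
  obtain ⟨lw, _, hlw⟩ := K.cs.exists_reduced_word w
  obtain ⟨z, hz⟩ := (K.omega_lattice i ω hω lw).1
  rw [← hlw] at hz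
  have hzc : ∀ k, c k = -(z k : ℝ) := by
    have hli := Fintype.linearIndependent_iff.mp K.freeRoots (fun k => c k + (z k : ℝ))
    have hsum : (∑ k, (c k + (z k : ℝ)) • K.α k) = 0 := by
      apply LinearMap.ext
      intro v
      have h1 := hc v
      have h2 := hz v
      have h3 : ∑ k, (c k + (z k : ℝ)) * K.α k v
          = ∑ k, c k * K.α k v + ∑ k, (z k : ℝ) * K.α k v := by
        rw [← Finset.sum_add_distrib]
        exact Finset.sum_congr rfl (fun k _ => by ring)
      simp only [LinearMap.coe_sum, Finset.sum_apply, LinearMap.smul_apply, smul_eq_mul,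
        LinearMap.zero_apply]
      rw [h3]
      linarith
    have := hli hsum
    intro k
    have hk := this k
    linarith
  refine ⟨fun k => (-(z k)).toNat, ?_⟩
  intro v
  rw [hc v]
  congr 1
  apply Finset.sum_congr rfl
  intro k _
  congr 1
  have hnn : (0:ℤ) ≤ -(z k) := by
    have h0 := hc0 k
    rw [hzc k] at h0
    exact_mod_cast h0
  have hcast : (((-z k).toNat : ℤ) : ℝ) = ((-z k : ℤ) : ℝ) := by
    rw [Int.toNat_of_nonneg hnn]
  rw [hzc k]
  push_cast at hcast ⊢
  linarith

lemma omega_nat_unique (w : W) (m m' : Fin n → ℕ)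
    (h : ∀ v, ω i (K.ρ w v) = ω i v - ∑ k, (m k : ℝ) * K.α k v)
    (h' : ∀ v, ω i (K.ρ w v) = ω i v - ∑ k, (m' k : ℝ) * K.α k v) : m = m' := by
  have hli := Fintype.linearIndependent_iff.mp K.freeRoots
    (fun k => (m k : ℝ) - (m' k : ℝ))
  have hsum : (∑ k, ((m k : ℝ) - (m' k : ℝ)) • K.α k) = 0 := by
    apply LinearMap.ext
    intro v
    have h1 := h v
    have h2 := h' v
    have h3 : ∑ k, ((m k : ℝ) - (m' k : ℝ)) * K.α k v
        = ∑ k, (m k : ℝ) * K.α k v - ∑ k, (m' k : ℝ) * K.α k v := by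
      rw [← Finset.sum_sub_distrib]
      exact Finset.sum_congr rfl (fun k _ => by ring)
    simp only [LinearMap.coe_sum, Finset.sum_apply, LinearMap.smul_apply, smul_eq_mul,
      LinearMap.zero_apply]
    rw [h3]
    linarith
  have hz := hli hsum
  funext k
  have := hz k
  have : (m k : ℝ) = (m' k : ℝ) := by linarith
  exact_mod_cast this

/-- The stabilizer of the functional `ω i` is contained in the standard subgroup. -/
lemma stab_le_std (hω : ∀ i j, ω i (K.cor j) = if i = j then 1 else 0) :
    ∀ (N : ℕ) (w : W), K.cs.length w ≤ N → (∀ v, ω i (K.ρ w v) = ω i v) →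
      w ∈ K.std {k | k ≠ i} := by
  intro N
  induction N with
  | zero =>
    intro w hw _
    have hw1 : w = 1 := K.cs.length_eq_zero_iff.mp (Nat.le_zero.mp hw)
    subst hw1
    exact one_mem _
  | succ N ih =>
    intro w hw hstab
    by_cases hw1 : w = 1
    · subst hw1; exact one_mem _
    · obtain ⟨k0, hk0⟩ := K.cs.exists_rightDescent_of_ne_one hw1
      have hlen : K.cs.length (w * K.cs.simple k0) + 1 = K.cs.length w :=
        (K.cs.isRightDescent_iff).mp hk0
      set w' := w * K.cs.simple k0 with hw'
      have hww : w = w' * K.cs.simple k0 := by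
        rw [hw', mul_assoc, K.cs.simple_mul_simple_self, mul_one]
      have hndesc : ¬ K.cs.IsRightDescent w' k0 := by
        rw [K.cs.isRightDescent_iff, ← hww]
        omega
      have hd : 0 ≤ ω i (K.ρ w' (K.cor k0)) :=
        K.omega_nonneg_of_Pos i ω hω (K.posRoot w' k0 hndesc)
      have hcorneg : K.ρ (K.cs.simple k0) (K.cor k0) = - K.cor k0 := by
        rw [K.rho_simple_cor, K.diag]
        push_cast
        module
      have hval : ω i (K.ρ w (K.cor k0)) = - ω i (K.ρ w' (K.cor k0)) := by
        rw [hww, K.rho_mul_apply, hcorneg, map_neg, map_neg]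
      have hstabval : ω i (K.ρ w (K.cor k0)) = if i = k0 then 1 else 0 := by
        rw [hstab (K.cor k0), hω]
      have hik0 : i ≠ k0 := by
        intro hik
        rw [hstabval, if_pos hik] at hval
        linarith
      have hzero : ω i (K.ρ w' (K.cor k0)) = 0 := by
        rw [hstabval, if_neg hik0] at hval
        linarith
      have hstab' : ∀ v, ω i (K.ρ w' v) = ω i v := by
        intro v
        have h1 : K.ρ w' v = K.ρ w (K.ρ (K.cs.simple k0) v) := by
          rw [hw', K.rho_mul_apply]
        rw [h1, hstab, K.refl, map_sub, map_smul, smul_eq_mul, hω, if_neg hik0]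
        ring
      have hw'mem := ih w' (by omega) hstab'
      have hsk0 : K.cs.simple k0 ∈ K.std {k | k ≠ i} := by
        apply Subgroup.subset_closure
        exact ⟨k0, fun h => hik0 h.symm, rfl⟩
      rw [hww]
      exact mul_mem hw'mem hsk0

lemma std_le_stab (hω : ∀ i j, ω i (K.cor j) = if i = j then 1 else 0) :
    ∀ w ∈ K.std {k | k ≠ i}, ∀ v, ω i (K.ρ w v) = ω i v := by
  intro w hw
  induction hw using Subgroup.closure_induction with
  | mem x hx =>
    obtain ⟨t, ht, rfl⟩ := hx
    intro v
    rw [K.refl, map_sub, map_smul, smul_eq_mul, hω, if_neg (fun h => ht h.symm)]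
    ring
  | one => intro v; simp
  | mul a b _ _ ha hb =>
    intro v
    rw [K.rho_mul_apply, ha, hb]
  | inv a _ ha =>
    intro v
    have := ha (K.ρ a⁻¹ v)
    rw [← K.rho_mul_apply, mul_inv_cancel, map_one] at this
    exact this.symm

end Endgame

end KMWeyl

/-- Infinite-index case: if `W^{(i)}` has infinite index in `W`, then every slice
`P^{(i)}(t)` with `t ≤ ⟨ω_i, h⟩` is nonempty; equivalently `{⟨ω_i, w(h)⟩}` is unbounded
below. -/
theorem stmt_13 {n : ℕ} {V : Type*} [AddCommGroup V] [Module ℝ V]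
    {W : Type*} [Group W] {M : CoxeterMatrix (Fin n)} (K : KMWeyl n V W M)
    (h : V) (hC : ∀ i, 0 < K.α i h)
    (ω : Fin n → (V →ₗ[ℝ] ℝ)) (hω : ∀ i j, ω i (K.cor j) = if i = j then 1 else 0)
    (i : Fin n) (hinf : (K.std {k | k ≠ i}).index = 0) :
    (∀ t : ℝ, t ≤ ω i h → ∃ y ∈ convexHull ℝ (K.orb h), ω i y = t) ∧
    (∀ t : ℝ, ∃ w : W, ω i (K.ρ w h) ≤ t) := by
  classical
  have part2 : ∀ t : ℝ, ∃ w : W, ω i (K.ρ w h) ≤ t := by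
    by_contra hcon
    push_neg at hcon
    obtain ⟨t0, ht0⟩ := hcon
    have hnat := fun w : W => K.omega_nat i ω hω w
    choose m hm using hnat
    have hne : (Finset.univ : Finset (Fin n)).Nonempty := ⟨i, Finset.mem_univ i⟩
    set ε := Finset.univ.inf' hne (fun k => K.α k h) with hε
    have hε0 : 0 < ε := by
      rw [hε, Finset.lt_inf'_iff]
      exact fun k _ => hC k
    have hεle : ∀ k, ε ≤ K.α k h := fun k => Finset.inf'_le _ (Finset.mem_univ k)
    set B := (ω i h - t0) / ε with hB
    have hbound : ∀ (w : W) (k : Fin n), (m w k : ℝ) ≤ B := by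
      intro w k
      have h1 := hm w h
      have h2 := ht0 w
      have hsum : ∑ r, (m w r : ℝ) * K.α r h < ω i h - t0 := by
        rw [h1] at h2; linarith
      have hterm : (m w k : ℝ) * ε ≤ (m w k : ℝ) * K.α k h :=
        mul_le_mul_of_nonneg_left (hεle k) (by positivity)
      have hsingle : (m w k : ℝ) * K.α k h ≤ ∑ r, (m w r : ℝ) * K.α r h := by
        apply Finset.single_le_sum (f := fun r => (m w r : ℝ) * K.α r h) ?_ (Finset.mem_univ k)
        intro r _
        have h3 := (hC r).le
        positivity
      rw [hB, le_div_iff₀ hε0]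
      linarith
    set C : ℕ := Nat.ceil B with hCdef
    have hboundC : ∀ (w : W) (k : Fin n), m w k ≤ C := by
      intro w k
      have h1 : (m w k : ℝ) ≤ B := hbound w k
      have h2 : B ≤ (C : ℝ) := Nat.le_ceil B
      exact_mod_cast h1.trans h2
    set H := K.std {k | k ≠ i} with hH
    have Hstab : ∀ w ∈ H, ∀ v, ω i (K.ρ w v) = ω i v := K.std_le_stab i ω hω
    have stabH : ∀ w : W, (∀ v, ω i (K.ρ w v) = ω i v) → w ∈ H :=
      fun w hs => K.stab_le_std i ω hω (K.cs.length w) w le_rfl hs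
    set F : W → (Fin n → Fin (C + 1)) :=
      fun w k => ⟨m w⁻¹ k, Nat.lt_succ_of_le (hboundC _ k)⟩ with hF
    have keyF : ∀ a b : W, (∀ v, ω i (K.ρ a⁻¹ v) = ω i (K.ρ b⁻¹ v)) → F a = F b := by
      intro a b hab
      have heq : ∀ v, ω i (K.ρ a⁻¹ v) = ω i v - ∑ k, (m b⁻¹ k : ℝ) * K.α k v := by
        intro v; rw [hab v]; exact hm b⁻¹ v
      have hme := K.omega_nat_unique i ω a⁻¹ (m a⁻¹) (m b⁻¹) (hm a⁻¹) heq
      funext k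
      exact Fin.ext (by simp only [hF]; rw [hme])
    have hresp : ∀ a b : W, (QuotientGroup.leftRel H).r a b → F a = F b := by
      intro a b hab
      rw [QuotientGroup.leftRel_apply] at hab
      apply keyF
      intro v
      have hgr : (a⁻¹ * b)⁻¹ * a⁻¹ = b⁻¹ := by group
      have h1 : ω i (K.ρ b⁻¹ v) = ω i (K.ρ (a⁻¹ * b)⁻¹ (K.ρ a⁻¹ v)) := by
        rw [← K.rho_mul_apply, hgr]
      rw [h1, Hstab _ (inv_mem hab)]
    let Ψ : W ⧸ H → (Fin n → Fin (C + 1)) := Quotient.lift F hresp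
    have hinj : Function.Injective Ψ := by
      intro x y
      induction x using Quotient.inductionOn with | _ a =>
      induction y using Quotient.inductionOn with | _ b =>
      intro hxy
      have hFab : F a = F b := hxy
      have hmeq : m a⁻¹ = m b⁻¹ := by
        funext k
        have h4 := congrFun hFab k
        simpa [hF, Fin.ext_iff] using h4
      have hfunc : ∀ v, ω i (K.ρ a⁻¹ v) = ω i (K.ρ b⁻¹ v) := by
        intro v; rw [hm a⁻¹ v, hm b⁻¹ v, hmeq]
      have hmem : a⁻¹ * b ∈ H := by
        apply stabH
        intro v
        have h5 := hfunc (K.ρ b v)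
        rw [← K.rho_mul_apply, ← K.rho_mul_apply, inv_mul_cancel, map_one,
          Module.End.one_apply] at h5
        exact h5
      exact Quotient.sound (QuotientGroup.leftRel_apply.mpr hmem)
    have hfin : Finite (W ⧸ H) := Finite.of_injective Ψ hinj
    exact Subgroup.index_ne_zero_of_finite hinf
  refine ⟨?_, part2⟩
  intro t ht
  obtain ⟨w, hw⟩ := part2 t
  have hh : h ∈ convexHull ℝ (K.orb h) := by
    apply subset_convexHull
    exact ⟨1, by simp⟩
  have hx : K.ρ w h ∈ convexHull ℝ (K.orb h) := subset_convexHull ℝ _ ⟨w, rfl⟩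
  set fw := ω i (K.ρ w h) with hfw
  by_cases hcase : ω i h = fw
  · exact ⟨h, hh, by linarith⟩
  · have hlt : fw < ω i h := lt_of_le_of_ne (hw.trans ht) (fun hg => hcase hg.symm)
    set θ := (t - fw) / (ω i h - fw) with hθ
    have hθ0 : 0 ≤ θ := div_nonneg (by linarith) (by linarith)
    have hθ1 : θ ≤ 1 := by
      rw [hθ, div_le_one (by linarith)]
      linarith
    refine ⟨θ • h + (1 - θ) • K.ρ w h, ?_, ?_⟩
    · exact (convex_convexHull ℝ _) hh hx hθ0 (by linarith) (by ring)
    · rw [map_add, map_smul, map_smul, smul_eq_mul, smul_eq_mul]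
      have hDne : ω i h - fw ≠ 0 := by linarith
      rw [hθ]
      field_simp
      ring
end

section
/- Kostant convexity for $\mathrm{SL}_2$, image description: with $a = \operatorname{diag}(e^r, e^{-r})$, $r > 0$, and $\Pi : \mathrm{SL}_2(\mathbb{R}) \to A$ the Iwasawa projection, the set $\{\Pi(a k) : k \in \mathrm{SO}(2)\}$ equals $\{\operatorname{diag}(e^s, e^{-s}) : s \in [-r, r]\}$, i.e. the exponential of the segment joining $\operatorname{diag}(r,-r)$ and $\operatorname{diag}(-r,r)$ in the Cartan subalgebra. -/
open Real

/-- A matrix is a rotation, i.e. lies in `SO(2)`. -/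
def IsSO2 (k : Matrix (Fin 2) (Fin 2) ℝ) : Prop :=
  k.transpose * k = 1 ∧ k.det = 1

/-- A matrix is upper unitriangular. -/
def IsUniUpper (u : Matrix (Fin 2) (Fin 2) ℝ) : Prop :=
  u 0 0 = 1 ∧ u 1 1 = 1 ∧ u 1 0 = 0

lemma tr2 (a b c d : ℝ) : (!![a, b; c, d]).transpose = !![a, c; b, d] := by
  ext i j; fin_cases i <;> fin_cases j <;> rfl

set_option maxHeartbeats 1000000 in
/-- Kostant convexity for `SL₂(ℝ)`, image description: the set of Iwasawa `A`-components of
`a k`, for `a = diag(eʳ, e⁻ʳ)` with `r > 0` and `k` ranging over `SO(2)`, is exactly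
`{diag(eˢ, e⁻ˢ) : s ∈ [-r, r]}`. -/
theorem stmt_16 (r : ℝ) (hr : 0 < r) :
    {d : ℝ | 0 < d ∧ ∃ k k' u : Matrix (Fin 2) (Fin 2) ℝ, IsSO2 k ∧ IsSO2 k' ∧ IsUniUpper u ∧
        !![exp r, 0; 0, exp (-r)] * k = k' * !![d, 0; 0, d⁻¹] * u} =
      {d : ℝ | ∃ s ∈ Set.Icc (-r) r, d = exp s} := by
  have hA : (0:ℝ) < exp r := exp_pos r
  have hB : (0:ℝ) < exp (-r) := exp_pos (-r)
  have hAB : exp r * exp (-r) = 1 := by rw [← exp_add]; simp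
  have hBA : exp (-r) < exp r := exp_lt_exp.mpr (by linarith)
  ext d
  simp only [Set.mem_setOf_eq]
  constructor
  · rintro ⟨hd, k, k', u, ⟨hk1, hk2⟩, ⟨hk'1, hk'2⟩, ⟨hu1, hu2, hu3⟩, hEq⟩
    have hkcol : k 0 0 * k 0 0 + k 1 0 * k 1 0 = 1 := by
      have := Matrix.ext_iff.mpr hk1 0 0
      simpa [Matrix.mul_apply, Fin.sum_univ_two, Matrix.transpose_apply,
        Matrix.one_apply] using this
    have hk'col : k' 0 0 * k' 0 0 + k' 1 0 * k' 1 0 = 1 := by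
      have := Matrix.ext_iff.mpr hk'1 0 0
      simpa [Matrix.mul_apply, Fin.sum_univ_two, Matrix.transpose_apply,
        Matrix.one_apply] using this
    have e00 : exp r * k 0 0 = k' 0 0 * d := by
      have := Matrix.ext_iff.mpr hEq 0 0
      simp [Matrix.mul_apply, Fin.sum_univ_two, hu1, hu3] at this
      linarith [this]
    have e10 : exp (-r) * k 1 0 = k' 1 0 * d := by
      have := Matrix.ext_iff.mpr hEq 1 0
      simp [Matrix.mul_apply, Fin.sum_univ_two, hu1, hu3] at this
      linarith [this]
    have hd2 : d ^ 2 = (exp r * k 0 0) ^ 2 + (exp (-r) * k 1 0) ^ 2 := by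
      rw [e00, e10]; nlinarith [hk'col]
    have hsq1 : d ^ 2 ≤ (exp r) ^ 2 := by
      nlinarith [mul_nonneg (by nlinarith : (0:ℝ) ≤ exp r ^ 2 - exp (-r) ^ 2)
        (sq_nonneg (k 1 0))]
    have hsq2 : (exp (-r)) ^ 2 ≤ d ^ 2 := by
      nlinarith [mul_nonneg (by nlinarith : (0:ℝ) ≤ exp r ^ 2 - exp (-r) ^ 2)
        (sq_nonneg (k 0 0))]
    have hupper : d ≤ exp r := by
      have h := Real.sqrt_le_sqrt hsq1
      rwa [Real.sqrt_sq hd.le, Real.sqrt_sq hA.le] at h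
    have hlower : exp (-r) ≤ d := by
      have h := Real.sqrt_le_sqrt hsq2
      rwa [Real.sqrt_sq hd.le, Real.sqrt_sq hB.le] at h
    refine ⟨Real.log d, ⟨?_, ?_⟩, (Real.exp_log hd).symm⟩
    · rw [← Real.log_exp (-r)]; exact Real.log_le_log hB hlower
    · rw [← Real.log_exp r]; exact Real.log_le_log hd hupper
  · rintro ⟨s, ⟨hs1, hs2⟩, rfl⟩
    set A := exp r with hAdef
    set B := exp (-r) with hBdef
    set d := exp s with hddef
    have hd0 : 0 < d := exp_pos s
    have hdne : d ≠ 0 := ne_of_gt hd0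
    have hBd : B ≤ d := exp_le_exp.mpr hs1
    have hdA : d ≤ A := exp_le_exp.mpr hs2
    have hBA' : B < A := exp_lt_exp.mpr (by linarith)
    have hden : 0 < A ^ 2 - B ^ 2 := by nlinarith [pow_lt_pow_left₀ hBA' hB.le (by norm_num : 2 ≠ 0)]
    set c2 : ℝ := (d ^ 2 - B ^ 2) / (A ^ 2 - B ^ 2) with hc2def
    have hc2nn : 0 ≤ c2 := div_nonneg (by nlinarith [pow_le_pow_left₀ hB.le hBd 2]) (le_of_lt hden)
    have hc2le : c2 ≤ 1 := by
      rw [div_le_one hden]; nlinarith [pow_le_pow_left₀ hd0.le hdA 2]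
    set c : ℝ := Real.sqrt c2 with hcdef
    set s' : ℝ := Real.sqrt (1 - c2) with hs'def
    have hc : c ^ 2 = c2 := Real.sq_sqrt hc2nn
    have hs' : s' ^ 2 = 1 - c2 := Real.sq_sqrt (by linarith)
    have hone : c ^ 2 + s' ^ 2 = 1 := by rw [hc, hs']; ring
    have key : A ^ 2 * c ^ 2 + B ^ 2 * s' ^ 2 = d ^ 2 := by
      rw [hc, hs', hc2def]; field_simp; ring
    refine ⟨hd0, !![c, -s'; s', c],
      !![A * c / d, -(B * s') / d; B * s' / d, A * c / d],
      !![1, c * s' * (B ^ 2 - A ^ 2) / d ^ 2; 0, 1], ⟨?_, ?_⟩, ⟨?_, ?_⟩, ⟨rfl, rfl, rfl⟩, ?_⟩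
    · rw [tr2, Matrix.mul_fin_two, Matrix.one_fin_two]
      ext i j
      fin_cases i <;> fin_cases j <;> simp <;> linarith [hone]
    · rw [Matrix.det_fin_two_of]; linear_combination hone
    · rw [tr2, Matrix.mul_fin_two, Matrix.one_fin_two]
      ext i j
      fin_cases i <;> fin_cases j <;> simp <;> field_simp <;>
        linarith [key]
    · rw [Matrix.det_fin_two_of]; field_simp; linear_combination key
    · rw [Matrix.mul_fin_two, Matrix.mul_fin_two, Matrix.mul_fin_two]
      ext i j
      fin_cases i <;> fin_cases j <;> simp <;> field_simp
      · linear_combination (A * s') * key - (A * B^2 * s') * hone - (B * s') * hAB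
      · linear_combination (-(B * c)) * key + (A^2 * B * c) * hone + (A * c) * hAB
end

section
/- Let $\mathbb{A}$ be an invertible symmetrizable GCM of size $n$ whose decomposition into indecomposable blocks contains a block of indefinite type, and let $W$ be its Weyl group acting on $\mathfrak{a} = \bigoplus_i \mathbb{R}\alpha_i^\vee$. Then for every $h$ in the open fundamental chamber $C$ (i.e. $\mathbb{A}^T\lambda > 0$ for the coordinate vector $\lambda$ of $h$ in the coroot basis), at least one coordinate $\lambda_j$ is negative; consequently $0 \notin \operatorname{conv}(W \cdot h)$. -/
open scoped Pointwise

/-- Adjacency between indices of a GCM (nonzero off-diagonal entry). -/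
def matAdj {n : ℕ} (A : Matrix (Fin n) (Fin n) ℤ) (i j : Fin n) : Prop :=
  i ≠ j ∧ A i j ≠ 0

/-- The connected component of `i` among the indecomposable blocks of a GCM. -/
def matComp {n : ℕ} (A : Matrix (Fin n) (Fin n) ℤ) (i : Fin n) : Set (Fin n) :=
  {j | Relation.ReflTransGen (matAdj A) i j}

-- auxiliary development, to be inserted before stmt_17
section Aux

open CoxeterSystem

/-- Alternating word starting with `i`. -/
def altS {B : Type*} : B → B → ℕ → List B
  | _, _, 0 => []
  | i, j, q+1 => i :: altS j i q

lemma altS_length {B : Type*} (i j : B) (q : ℕ) : (altS i j q).length = q := by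
  induction q generalizing i j with
  | zero => rfl
  | succ q ih => simp [altS, ih]

lemma altS_concat {B : Type*} (i j : B) (q : ℕ) :
    altS i j (q+1) = altS i j q ++ [if Even q then i else j] := by
  induction q generalizing i j with
  | zero => simp [altS]
  | succ q ih =>
    rw [show altS i j (q+1+1) = i :: altS j i (q+1) from rfl, ih j i,
      show altS i j (q+1) = i :: altS j i q from rfl]
    rcases Nat.even_or_odd q with hq | hq
    · simp [hq, Nat.even_add_one]
    · simp [Nat.not_even_iff_odd.2 hq, Nat.even_add_one, hq]

lemma altS_eq_alternatingWord {B : Type*} (i j : B) (q : ℕ) :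
    altS i j q = if Even q then alternatingWord i j q else alternatingWord j i q := by
  induction q generalizing i j with
  | zero => simp [altS, alternatingWord]
  | succ q ih =>
    rw [show altS i j (q+1) = i :: altS j i q from rfl, ih j i]
    rcases Nat.even_or_odd q with hq | hq
    · rw [if_pos hq, if_neg (fun hc => (Nat.even_add_one.mp hc) hq),
        alternatingWord_succ' j i q, if_pos hq]
    · have hq' : ¬ Even q := Nat.not_even_iff_odd.2 hq
      rw [if_neg hq', if_pos (Nat.even_add_one.mpr hq'),
        alternatingWord_succ' i j q, if_neg hq']

variable {B : Type*} {M : CoxeterMatrix B} {W : Type*} [Group W]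

lemma red_le (cs : CoxeterSystem M W) (i j : B) (hM : M i j ≠ 0) (r : ℕ)
    (hred : cs.length (cs.wordProd (altS i j r)) = r) : r ≤ M i j := by
  by_contra hlt
  push_neg at hlt
  have hw : cs.IsReduced (altS i j r) := by
    unfold CoxeterSystem.IsReduced
    rw [hred, altS_length]
  rw [altS_eq_alternatingWord] at hw
  rcases Nat.even_or_odd r with hr | hr
  · rw [if_pos hr] at hw
    exact cs.not_isReduced_alternatingWord i j hM hlt hw
  · rw [if_neg (Nat.not_even_iff_odd.2 hr)] at hw
    exact cs.not_isReduced_alternatingWord j i (by rwa [M.symmetric j i]) (by rwa [M.symmetric j i]) hw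

end Aux

/-- Coefficient recursion for the rank-2 computation. -/
def Tstep (a b : ℝ) : ℕ → ℝ × ℝ
  | 0 => (1, 0)
  | q+1 =>
    let s := Tstep a b q
    if Even q then (s.1, -s.2 - b * s.1) else (-s.1 - a * s.2, s.2)

lemma Tstep_succ_even (a b : ℝ) (q : ℕ) (hq : Even q) :
    Tstep a b (q+1) = ((Tstep a b q).1, -(Tstep a b q).2 - b * (Tstep a b q).1) := by
  simp [Tstep, hq]

lemma Tstep_succ_odd (a b : ℝ) (q : ℕ) (hq : ¬ Even q) :
    Tstep a b (q+1) = (-(Tstep a b q).1 - a * (Tstep a b q).2, (Tstep a b q).2) := by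
  simp [Tstep, hq]

lemma Tstep_big (a b : ℝ) (ha : a ≤ -1) (hb : b ≤ -1) (hp : 4 ≤ a * b) (q : ℕ) :
    0 ≤ (Tstep a b q).1 ∧ 0 ≤ (Tstep a b q).2 ∧
      (Even q → 2 * (Tstep a b q).2 ≤ (-b) * (Tstep a b q).1) ∧
      (¬ Even q → 2 * (Tstep a b q).1 ≤ (-a) * (Tstep a b q).2) := by
  induction q with
  | zero =>
    refine ⟨by norm_num [Tstep], by norm_num [Tstep],
      fun _ => by norm_num [Tstep]; linarith, fun hc => absurd Even.zero hc⟩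
  | succ q ih =>
    obtain ⟨h1, h2, h3, h4⟩ := ih
    rcases Nat.even_or_odd q with hq | hq
    · have h3 := h3 hq
      rw [Tstep_succ_even a b q hq]
      simp only [Prod.fst, Prod.snd] at *
      have hq1 : ¬ Even (q+1) := by simp [Nat.even_add_one, hq]
      refine ⟨h1, by nlinarith, fun hc => absurd hc hq1, fun _ => ?_⟩
      nlinarith [mul_le_mul_of_nonneg_left h3 (by linarith : (0:ℝ) ≤ -a)]
    · have hq' : ¬ Even q := Nat.not_even_iff_odd.2 hq
      have h4 := h4 hq'
      rw [Tstep_succ_odd a b q hq']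
      simp only [Prod.fst, Prod.snd] at *
      have hq1 : Even (q+1) := Nat.even_add_one.mpr hq'
      refine ⟨by nlinarith, h2, fun _ => ?_, fun hc => absurd hq1 hc⟩
      nlinarith [mul_le_mul_of_nonneg_left h4 (by linarith : (0:ℝ) ≤ -b)]

namespace KMWeyl

variable {n : ℕ} {V : Type*} [AddCommGroup V] [Module ℝ V]
  {W : Type*} [Group W] {M : CoxeterMatrix (Fin n)}

lemma funId (K : KMWeyl n V W M) (i j : Fin n) (q : ℕ) (v : V) :
    K.α i (K.ρ (K.cs.wordProd (altS j i q)) v)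
      = (Tstep (K.A i j : ℝ) (K.A j i : ℝ) q).1 * K.α i v
        + (Tstep (K.A i j : ℝ) (K.A j i : ℝ) q).2 * K.α j v := by
  induction q generalizing v with
  | zero =>
    show K.α i (K.ρ (K.cs.wordProd []) v) = _
    rw [K.cs.wordProd_nil, map_one]
    simp [Tstep]
  | succ q ih =>
    rw [altS_concat, K.cs.wordProd_append, map_mul, Module.End.mul_apply,
      K.cs.wordProd_singleton]
    rcases Nat.even_or_odd q with hq | hq
    · rw [if_pos hq, ih (K.ρ (K.cs.simple j) v), K.refl j v,
        Tstep_succ_even _ _ q hq]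
      simp only [map_sub, map_smul, smul_eq_mul, K.pairing, Prod.fst, Prod.snd]
      rw [show K.A j j = 2 from K.diag j]
      push_cast
      ring
    · have hq' : ¬ Even q := Nat.not_even_iff_odd.2 hq
      rw [if_neg hq', ih (K.ρ (K.cs.simple i) v), K.refl i v,
        Tstep_succ_odd _ _ q hq']
      simp only [map_sub, map_smul, smul_eq_mul, K.pairing, Prod.fst, Prod.snd]
      rw [show K.A i i = 2 from K.diag i]
      push_cast
      ring

lemma rank2_s17 (K : KMWeyl n V W M) {i j : Fin n} (hij : i ≠ j) (q : ℕ)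
    (hred : K.cs.length (K.cs.wordProd (altS i j (q+1))) = q + 1) :
    0 ≤ (Tstep (K.A i j : ℝ) (K.A j i : ℝ) q).1
      ∧ 0 ≤ (Tstep (K.A i j : ℝ) (K.A j i : ℝ) q).2 := by
  have ha : K.A i j ≤ 0 := K.offDiag i j hij
  have hb : K.A j i ≤ 0 := K.offDiag j i (Ne.symm hij)
  have hp0 : 0 ≤ K.A i j * K.A j i := by nlinarith
  rcases lt_or_ge (K.A i j * K.A j i) 4 with h4 | h4
  · -- finite dihedral cases
    have hM : M i j = gcmCoxeterEntry (K.A i j * K.A j i) := K.coxMat i j hij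
    obtain ⟨p, hp⟩ : ∃ p, K.A i j * K.A j i = p := ⟨_, rfl⟩
    have hbound : q + 1 ≤ M i j := by
      apply red_le K.cs i j _ _ hred
      rw [hM, hp]
      have : p = 0 ∨ p = 1 ∨ p = 2 ∨ p = 3 := by omega
      rcases this with rfl | rfl | rfl | rfl <;> norm_num [gcmCoxeterEntry]
    rw [hM, hp] at hbound
    have hcases : p = 0 ∨ p = 1 ∨ p = 2 ∨ p = 3 := by omega
    rcases hcases with rfl | rfl | rfl | rfl
    · -- p = 0 : a = b = 0
      have hA : K.A i j = 0 := by
        rcases mul_eq_zero.mp hp with h | h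
        · exact h
        · exact (K.zeroIff i j).mpr h
      have hB : K.A j i = 0 := (K.zeroIff i j).mp hA
      norm_num [gcmCoxeterEntry] at hbound
      rw [hA, hB]
      have hq : q ≤ 1 := by omega
      interval_cases q <;> norm_num [Tstep, Nat.even_iff]
    · -- p = 1
      have ha1 : K.A i j ≤ -1 := by
        have h0 : K.A i j ≠ 0 := fun h0 => by rw [h0, zero_mul] at hp; omega
        omega
      have hb1 : K.A j i ≤ -1 := by
        have h0 : K.A j i ≠ 0 := fun h0 => by rw [h0, mul_zero] at hp; omega
        omega
      have hge : -2 ≤ K.A i j + K.A j i := by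
        nlinarith [mul_nonneg (show (0:ℤ) ≤ -(K.A i j + 1) by linarith)
          (show (0:ℤ) ≤ -(K.A j i + 1) by linarith)]
      have hA : K.A i j = -1 := by omega
      have hB : K.A j i = -1 := by omega
      norm_num [gcmCoxeterEntry] at hbound
      rw [hA, hB]
      have hq : q ≤ 2 := by omega
      interval_cases q <;> norm_num [Tstep, Nat.even_iff]
    · -- p = 2
      have ha1 : K.A i j ≤ -1 := by
        have h0 : K.A i j ≠ 0 := fun h0 => by rw [h0, zero_mul] at hp; omega
        omega
      have hb1 : K.A j i ≤ -1 := by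
        have h0 : K.A j i ≠ 0 := fun h0 => by rw [h0, mul_zero] at hp; omega
        omega
      have hge : -3 ≤ K.A i j + K.A j i := by
        nlinarith [mul_nonneg (show (0:ℤ) ≤ -(K.A i j + 1) by linarith)
          (show (0:ℤ) ≤ -(K.A j i + 1) by linarith)]
      norm_num [gcmCoxeterEntry] at hbound
      have hq : q ≤ 3 := by omega
      have hc : K.A i j = -1 ∨ K.A i j = -2 := by omega
      rcases hc with h1 | h1 <;> rw [h1] at hp ⊢
      · have hB : K.A j i = -2 := by omega
        rw [hB]
        interval_cases q <;> norm_num [Tstep, Nat.even_iff]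
      · have hB : K.A j i = -1 := by omega
        rw [hB]
        interval_cases q <;> norm_num [Tstep, Nat.even_iff]
    · -- p = 3
      have ha1 : K.A i j ≤ -1 := by
        have h0 : K.A i j ≠ 0 := fun h0 => by rw [h0, zero_mul] at hp; omega
        omega
      have hb1 : K.A j i ≤ -1 := by
        have h0 : K.A j i ≠ 0 := fun h0 => by rw [h0, mul_zero] at hp; omega
        omega
      have hge : -4 ≤ K.A i j + K.A j i := by
        nlinarith [mul_nonneg (show (0:ℤ) ≤ -(K.A i j + 1) by linarith)
          (show (0:ℤ) ≤ -(K.A j i + 1) by linarith)]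
      norm_num [gcmCoxeterEntry] at hbound
      have hq : q ≤ 5 := by omega
      have hc : K.A i j = -1 ∨ K.A i j = -2 ∨ K.A i j = -3 := by omega
      rcases hc with h1 | h1 | h1 <;> rw [h1] at hp ⊢
      · have hB : K.A j i = -3 := by omega
        rw [hB]
        interval_cases q <;> norm_num [Tstep, Nat.even_iff]
      · exfalso; omega
      · have hB : K.A j i = -1 := by omega
        rw [hB]
        interval_cases q <;> norm_num [Tstep, Nat.even_iff]
  · -- infinite dihedral case
    have ha1 : K.A i j ≤ -1 := by
      have h0 : K.A i j ≠ 0 := by intro h0; rw [h0, zero_mul] at h4; omega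
      omega
    have hb1 : K.A j i ≤ -1 := by
      have h0 : K.A j i ≠ 0 := by intro h0; rw [h0, mul_zero] at h4; omega
      omega
    have := Tstep_big (K.A i j : ℝ) (K.A j i : ℝ)
      (by exact_mod_cast ha1) (by exact_mod_cast hb1)
      (by exact_mod_cast h4) q
    exact ⟨this.1, this.2.1⟩

end KMWeyl

namespace KMWeyl

variable {n : ℕ} {V : Type*} [AddCommGroup V] [Module ℝ V]
  {W : Type*} [Group W] {M : CoxeterMatrix (Fin n)}

lemma peel (K : KMWeyl n V W M) :
    ∀ (N : ℕ) (w : W) (i j : Fin n), K.cs.length w ≤ N → i ≠ j →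
      ¬ K.cs.IsLeftDescent w i →
      ∃ (q : ℕ) (w' : W), w = K.cs.wordProd (altS j i q) * w' ∧
        K.cs.length w = q + K.cs.length w' ∧
        ¬ K.cs.IsLeftDescent w' i ∧ ¬ K.cs.IsLeftDescent w' j ∧
        K.cs.length (K.cs.wordProd (altS i j (q+1))) = q + 1 := by
  intro N
  induction N with
  | zero =>
    intro w i j hw hij hdi
    have hw1 : w = 1 := by
      have := K.cs.length_eq_zero_iff.mp (Nat.le_zero.mp hw)
      exact this
    refine ⟨0, w, by simp [altS], by simp, hdi, ?_, ?_⟩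
    · rw [hw1]; exact K.cs.not_isLeftDescent_one j
    · show K.cs.length (K.cs.wordProd [i]) = 1
      rw [K.cs.wordProd_singleton]; exact K.cs.length_simple i
  | succ N ih =>
    intro w i j hw hij hdi
    by_cases hdj : K.cs.IsLeftDescent w j
    · set w₁ := K.cs.simple j * w with hw₁
      have hwrec : w = K.cs.simple j * w₁ := by
        rw [hw₁, K.cs.simple_mul_simple_cancel_left]
      have hlen₁ : K.cs.length w₁ + 1 = K.cs.length w := K.cs.isLeftDescent_iff.mp hdj
      have hdj₁ : ¬ K.cs.IsLeftDescent w₁ j := by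
        unfold CoxeterSystem.IsLeftDescent
        rw [← hwrec]
        omega
      obtain ⟨q₁, w', he, hl, hdj', hdi', _⟩ :=
        ih w₁ j i (by omega) (Ne.symm hij) hdj₁
      refine ⟨q₁ + 1, w', ?_, by omega, hdi', hdj', ?_⟩
      · rw [hwrec, he, show altS j i (q₁+1) = j :: altS i j q₁ from rfl,
          K.cs.wordProd_cons, mul_assoc]
      · -- length of the (q₁+2)-letter alternating word starting with i
        show K.cs.length (K.cs.wordProd (altS i j (q₁+2))) = q₁ + 2
        have hsiw : K.cs.length (K.cs.simple i * w) = K.cs.length w + 1 :=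
          K.cs.not_isLeftDescent_iff.mp hdi
        have heq : K.cs.simple i * w = K.cs.wordProd (altS i j (q₁+2)) * w' := by
          rw [hwrec, he, show altS i j (q₁+2) = i :: altS j i (q₁+1) from rfl,
            show altS j i (q₁+1) = j :: altS i j q₁ from rfl,
            K.cs.wordProd_cons, K.cs.wordProd_cons, mul_assoc, mul_assoc]
        have hub : K.cs.length (K.cs.wordProd (altS i j (q₁+2))) ≤ q₁ + 2 := by
          have := K.cs.length_wordProd_le (altS i j (q₁+2))
          rwa [altS_length] at this
        have hlb : K.cs.length (K.cs.simple i * w) ≤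
            K.cs.length (K.cs.wordProd (altS i j (q₁+2))) + K.cs.length w' := by
          rw [heq]; exact K.cs.length_mul_le _ _
        omega
    · refine ⟨0, w, by simp [altS], by simp, hdi, hdj, ?_⟩
      show K.cs.length (K.cs.wordProd [i]) = 1
      rw [K.cs.wordProd_singleton]; exact K.cs.length_simple i

lemma dom (K : KMWeyl n V W M) (h : V) (hdom : ∀ l, 0 ≤ K.α l h) :
    ∀ (N : ℕ) (w : W), K.cs.length w ≤ N →
      ∀ i, ¬ K.cs.IsLeftDescent w i → 0 ≤ K.α i (K.ρ w h) := by
  intro N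
  induction N with
  | zero =>
    intro w hw i _
    have hw1 : w = 1 := K.cs.length_eq_zero_iff.mp (Nat.le_zero.mp hw)
    rw [hw1, map_one, Module.End.one_apply]
    exact hdom i
  | succ N ih =>
    intro w hw i hdi
    by_cases hw1 : w = 1
    · rw [hw1, map_one, Module.End.one_apply]; exact hdom i
    obtain ⟨j, hdj⟩ := K.cs.exists_leftDescent_of_ne_one hw1
    have hij : i ≠ j := by rintro rfl; exact hdi hdj
    obtain ⟨q, w', he, hl, hdi', hdj', hred⟩ := K.peel (N+1) w i j hw hij hdi
    rcases Nat.eq_zero_or_pos q with rfl | hq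
    · exfalso
      have hww : w = w' := by simpa [altS] using he
      exact hdj' (hww ▸ hdj)
    have hlw' : K.cs.length w' ≤ N := by omega
    have ⟨hc, hd⟩ := K.rank2_s17 hij q hred
    rw [he, map_mul, Module.End.mul_apply, K.funId i j q (K.ρ w' h)]
    have h1 := ih w' hlw' i hdi'
    have h2 := ih w' hlw' j hdj'
    positivity

end KMWeyl

namespace KMWeyl

variable {n : ℕ} {V : Type*} [AddCommGroup V] [Module ℝ V]
  {W : Type*} [Group W] {M : CoxeterMatrix (Fin n)}

lemma cone (K : KMWeyl n V W M) (h : V) (hdom : ∀ l, 0 ≤ K.α l h) :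
    ∀ (N : ℕ) (w : W), K.cs.length w ≤ N →
      ∃ c : Fin n → ℝ, (∀ l, 0 ≤ c l) ∧ K.ρ w h = h - ∑ l, c l • K.cor l := by
  intro N
  induction N with
  | zero =>
    intro w hw
    have hw1 : w = 1 := K.cs.length_eq_zero_iff.mp (Nat.le_zero.mp hw)
    exact ⟨0, fun l => le_refl 0, by simp [hw1]⟩
  | succ N ih =>
    intro w hw
    by_cases hw1 : w = 1
    · exact ⟨0, fun l => le_refl 0, by simp [hw1]⟩
    obtain ⟨j, hdj⟩ := K.cs.exists_leftDescent_of_ne_one hw1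
    set w₁ := K.cs.simple j * w with hw₁
    have hwrec : w = K.cs.simple j * w₁ := by
      rw [hw₁, K.cs.simple_mul_simple_cancel_left]
    have hlen₁ : K.cs.length w₁ + 1 = K.cs.length w := K.cs.isLeftDescent_iff.mp hdj
    have hdj₁ : ¬ K.cs.IsLeftDescent w₁ j := by
      unfold CoxeterSystem.IsLeftDescent
      rw [← hwrec]
      omega
    obtain ⟨c, hc, he⟩ := ih w₁ (by omega)
    have ht : 0 ≤ K.α j (K.ρ w₁ h) := K.dom h hdom N w₁ (by omega) j hdj₁
    classical
    set t := K.α j (K.ρ w₁ h) with htdef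
    refine ⟨fun l => c l + (if l = j then t else 0), ?_, ?_⟩
    · intro l
      by_cases hl : l = j <;> simp [hl] <;> [linarith [hc j]; exact hc l]
    · rw [hwrec, map_mul, Module.End.mul_apply, K.refl j (K.ρ w₁ h), ← htdef, he]
      simp only [add_smul, ite_smul, zero_smul, Finset.sum_add_distrib,
        Finset.sum_ite_eq', Finset.mem_univ, if_true]
      abel

end KMWeyl

/-- If an invertible symmetrizable GCM has an indecomposable block of indefinite type,
then every `h` in the open fundamental chamber has a negative coordinate in the coroot
basis; consequently `0 ∉ conv(W·h)`. -/
theorem stmt_17 {n : ℕ} {V : Type*} [AddCommGroup V] [Module ℝ V]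
    {W : Type*} [Group W] {M : CoxeterMatrix (Fin n)} (K : KMWeyl n V W M)
    (hdet : (K.A.map (Int.cast : ℤ → ℝ)).det ≠ 0)
    (hspan : Submodule.span ℝ (Set.range K.cor) = ⊤)
    (hblk : ∃ k : Fin n, ∀ μ : Fin n → ℝ,
      (∀ j, j ∉ matComp K.A k → μ j = 0) → (∀ j, 0 ≤ μ j) →
      (∀ i ∈ matComp K.A k, 0 ≤ ∑ j, (K.A j i : ℝ) * μ j) → μ = 0)
    (lam : Fin n → ℝ) (h : V) (hh : h = ∑ j, lam j • K.cor j)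
    (hC : ∀ i, 0 < K.α i h) :
    (∃ j, lam j < 0) ∧ (0 : V) ∉ convexHull ℝ (K.orb h) := by
  classical
  have hval : ∀ i, K.α i h = ∑ l, lam l * (K.A l i : ℝ) := by
    intro i
    rw [hh, map_sum]
    exact Finset.sum_congr rfl fun l _ => by rw [map_smul, smul_eq_mul, K.pairing l i]
  have hneg : ∃ j, lam j < 0 := by
    by_contra hcon
    push_neg at hcon
    obtain ⟨k, hk⟩ := hblk
    have key : ∀ l i, l ∉ matComp K.A k → i ∈ matComp K.A k → K.A l i = 0 := by
      intro l i hl hi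
      by_contra hne
      apply hl
      have hil : i ≠ l := by rintro rfl; exact hl hi
      have hAil : K.A i l ≠ 0 := fun h0 => hne ((K.zeroIff i l).mp h0)
      exact Relation.ReflTransGen.tail hi ⟨hil, hAil⟩
    set μ : Fin n → ℝ := fun l => if l ∈ matComp K.A k then lam l else 0 with hμ
    have hμ0 : μ = 0 := by
      apply hk
      · intro l hl; simp [hμ, hl]
      · intro l
        by_cases hl : l ∈ matComp K.A k
        · simpa [hμ, hl] using hcon l
        · simp [hμ, hl]
      · intro i hi
        have heq : (∑ l, (K.A l i : ℝ) * μ l) = K.α i h := by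
          rw [hval i]
          refine Finset.sum_congr rfl fun l _ => ?_
          by_cases hl : l ∈ matComp K.A k
          · simp only [hμ, if_pos hl]; ring
          · simp [hμ, hl, key l i hl hi]
        rw [heq]; exact (hC i).le
    have hαk : K.α k h = 0 := by
      rw [hval k]
      apply Finset.sum_eq_zero
      intro l _
      by_cases hl : l ∈ matComp K.A k
      · have hl0 := congrFun hμ0 l
        simp only [hμ, if_pos hl, Pi.zero_apply] at hl0
        rw [hl0, zero_mul]
      · rw [key l k hl Relation.ReflTransGen.refl]
        simp
    linarith [hC k]
  refine ⟨hneg, fun hmem => ?_⟩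
  obtain ⟨j, hj⟩ := hneg
  let b : Module.Basis (Fin n) ℝ V := Module.Basis.mk K.cofree hspan.ge
  have hb : ∀ l, b l = K.cor l := fun l => Module.Basis.mk_apply _ _ l
  have hfcor : ∀ l, b.coord j (K.cor l) = if l = j then 1 else 0 := by
    intro l
    rw [← hb l, Module.Basis.coord_apply, b.repr_self, Finsupp.single_apply]
  have hsum : ∀ (g : Fin n → ℝ), b.coord j (∑ l, g l • K.cor l) = g j := by
    intro g
    rw [map_sum]
    have hterm : ∀ l, b.coord j (g l • K.cor l) = if l = j then g l else 0 := by
      intro l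
      rw [map_smul, smul_eq_mul, hfcor l]
      by_cases hl : l = j <;> simp [hl]
    rw [Finset.sum_congr rfl (fun l _ => hterm l),
      Finset.sum_ite_eq' Finset.univ j g]
    simp
  have hfh : b.coord j h = lam j := by rw [hh, hsum lam]
  have hsub : K.orb h ⊆ {x | b.coord j x ≤ lam j} := by
    rintro x ⟨w, rfl⟩
    obtain ⟨c, hc, he⟩ := K.cone h (fun l => (hC l).le) (K.cs.length w) w le_rfl
    simp only [Set.mem_setOf_eq]
    rw [he, map_sub, hfh, hsum c]
    linarith [hc j]
  have h0 : (0:V) ∈ {x | b.coord j x ≤ lam j} :=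
    convexHull_min hsub (convex_halfSpace_le (b.coord j).isLinear _) hmem
  simp only [Set.mem_setOf_eq, map_zero] at h0
  linarith
end
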